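/- Assume there are infinitely many twin primes (so that the n-th twin prime 𝔭_n is defined for all n), and assume there exist constants C > 0, c > 0 and x₁ ≥ 2 such that π₂(x) ≤ C·Π₂·x/(log x)²·(1 + c·(log log x)/(log x)) for all x ≥ x₁. Then for every C' > C there exists a positive integer N(C') such that 𝔭_n ≥ (n/(C'·Π₂))·(log n)² for all n ≥ N(C'). -/

import Mathlib

open Classical

/-- A prime `p` is a twin prime if at least one of `p − 2`, `p + 2` is also prime. -/
def IsTwinPrime (p : ℕ) : Prop :=
  Nat.Prime p ∧ (Nat.Prime (p - 2) ∨ Nat.Prime (p + 2))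

/-- The `n`-th twin prime, 1-indexed: `nthTwinPrime 1 = 3`, `nthTwinPrime 2 = 5`, ... -/
noncomputable def nthTwinPrime (n : ℕ) : ℕ := Nat.nth IsTwinPrime (n - 1)

/-- `twinPrimeCounting x` is the number of twin primes `≤ x`. -/
noncomputable def twinPrimeCounting (x : ℝ) : ℕ :=
  {p : ℕ | IsTwinPrime p ∧ (p : ℝ) ≤ x}.ncard

/-- The twin prime constant `Π₂ = ∏_{p prime, p ≥ 3} (1 − 1/(p−1)²)`. -/
noncomputable def twinPrimeConstant : ℝ :=
  ∏' p : {p : ℕ // Nat.Prime p ∧ 3 ≤ p}, (1 - 1 / (((p : ℕ) : ℝ) - 1) ^ 2)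

lemma isTwinPrime_three : IsTwinPrime 3 :=
  ⟨by norm_num, Or.inr (by norm_num)⟩

lemma twinPrime_ge_three {p : ℕ} (hp : IsTwinPrime p) : 3 ≤ p := by
  obtain ⟨h1, h2⟩ := hp
  rcases Nat.lt_or_ge p 3 with h | h
  · interval_cases p <;> simp_all (config := {decide := true})
  · exact h

lemma count_twin_eq (P : ℕ) :
    twinPrimeCounting (P : ℝ) = Nat.count IsTwinPrime (P + 1) := by
  rw [twinPrimeCounting, Nat.count_eq_card_filter_range, ← Set.ncard_coe_finset]
  congr 1
  ext x
  simp [Nat.lt_succ_iff]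
  tauto

lemma nth_twin_ge (hinf : {p : ℕ | IsTwinPrime p}.Infinite) (k : ℕ) :
    k + 3 ≤ Nat.nth IsTwinPrime k := by
  induction k with
  | zero => simpa using twinPrime_ge_three (Nat.nth_mem_of_infinite hinf 0)
  | succ k ih =>
      have h : Nat.nth IsTwinPrime k < Nat.nth IsTwinPrime (k + 1) :=
        Nat.nth_strictMono hinf (Nat.lt_succ_self k)
      omega

lemma loglog_div_log_tendsto :
    Filter.Tendsto (fun x : ℝ => Real.log (Real.log x) / Real.log x)
      Filter.atTop (nhds 0) :=
  (Real.isLittleO_log_id_atTop.tendsto_div_nhds_zero).comp Real.tendsto_log_atTop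

theorem nth_twin_prime_lower_bound
    (hinf : {p : ℕ | IsTwinPrime p}.Infinite)
    (C c x₁ : ℝ) (hC : 0 < C) (hc : 0 < c) (hx₁ : 2 ≤ x₁)
    (hbound : ∀ x : ℝ, x₁ ≤ x →
      (twinPrimeCounting x : ℝ) ≤
        C * twinPrimeConstant * x / Real.log x ^ 2 *
          (1 + c * Real.log (Real.log x) / Real.log x))
    (C' : ℝ) (hC' : C < C') :
    ∃ N : ℕ, 0 < N ∧ ∀ n : ℕ, N ≤ n →
      (n : ℝ) / (C' * twinPrimeConstant) * Real.log (n : ℝ) ^ 2 ≤ (nthTwinPrime n : ℝ) := by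
  have hlog3 : (1 : ℝ) ≤ Real.log 3 := by
    rw [Real.le_log_iff_exp_le (by norm_num : (0:ℝ) < 3)]
    have h := Real.exp_one_lt_d9.le
    linarith
  -- Π₂ > 0
  have hPi : 0 < twinPrimeConstant := by
    set x₀ := max x₁ 3 with hx₀def
    have hx₀3 : (3:ℝ) ≤ x₀ := le_max_right _ _
    have hx₀1 : x₁ ≤ x₀ := le_max_left _ _
    have hlogx₀ : 1 ≤ Real.log x₀ := hlog3.trans (Real.log_le_log (by norm_num) hx₀3)
    have hllx₀ : 0 ≤ Real.log (Real.log x₀) := Real.log_nonneg hlogx₀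
    have hcount : (1 : ℝ) ≤ (twinPrimeCounting x₀ : ℝ) := by
      have hfin : {p : ℕ | IsTwinPrime p ∧ (p : ℝ) ≤ x₀}.Finite := by
        apply (Set.finite_Iic (⌈x₀⌉₊ : ℕ)).subset
        intro p hp
        exact Set.mem_Iic.2 (Nat.cast_le.mp (hp.2.trans (Nat.le_ceil x₀)))
      have hne : {p : ℕ | IsTwinPrime p ∧ (p : ℝ) ≤ x₀}.Nonempty :=
        ⟨3, isTwinPrime_three, by exact_mod_cast hx₀3⟩
      have := (Set.ncard_pos hfin).mpr hne
      exact_mod_cast this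
    have hb := (hbound x₀ hx₀1).trans' hcount
    by_contra h
    push_neg at h
    have hnum : C * twinPrimeConstant * x₀ ≤ 0 :=
      mul_nonpos_iff.mpr (Or.inr ⟨mul_nonpos_iff.mpr (Or.inl ⟨hC.le, h⟩), by linarith⟩)
    have hdiv : C * twinPrimeConstant * x₀ / Real.log x₀ ^ 2 ≤ 0 :=
      div_nonpos_iff.mpr (Or.inr ⟨hnum, sq_nonneg _⟩)
    have hfac : 0 ≤ 1 + c * Real.log (Real.log x₀) / Real.log x₀ := by
      have : 0 ≤ c * Real.log (Real.log x₀) / Real.log x₀ :=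
        div_nonneg (mul_nonneg hc.le hllx₀) (by linarith)
      linarith
    nlinarith [mul_nonpos_iff.mpr (Or.inr ⟨hdiv, hfac⟩)]
  -- threshold from the limit
  have hδ : (0:ℝ) < (C' - C)/C := div_pos (by linarith) hC
  have hev : ∀ᶠ x : ℝ in Filter.atTop,
      c * (Real.log (Real.log x) / Real.log x) ≤ (C' - C)/C :=
    (loglog_div_log_tendsto.const_mul c).eventually
      (by simpa using eventually_le_nhds (by simpa using hδ))
  obtain ⟨T, hT⟩ := Filter.eventually_atTop.mp hev
  set N : ℕ := max 1 (max ⌈x₁⌉₊ ⌈T⌉₊) with hN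
  refine ⟨N, lt_of_lt_of_le Nat.one_pos (le_max_left _ _), fun n hn => ?_⟩
  have hn1 : 1 ≤ n := le_trans (le_max_left _ _) hn
  set P : ℕ := Nat.nth IsTwinPrime (n - 1) with hP
  have hPge : n + 2 ≤ P := by have := nth_twin_ge hinf (n - 1); omega
  have hPn : (n : ℝ) ≤ (P : ℝ) := by exact_mod_cast Nat.le_of_lt (by omega)
  have hNn : (N : ℝ) ≤ (P : ℝ) := le_trans (by exact_mod_cast hn) hPn
  have hPx₁ : x₁ ≤ (P : ℝ) :=
    le_trans ((Nat.le_ceil x₁).trans (by exact_mod_cast le_trans (le_max_left _ _) (le_max_right 1 _))) hNn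
  have hPT : T ≤ (P : ℝ) :=
    le_trans ((Nat.le_ceil T).trans (by exact_mod_cast le_trans (le_max_right _ _) (le_max_right 1 _))) hNn
  have hP3 : (3:ℝ) ≤ (P : ℝ) := by exact_mod_cast (by omega : 3 ≤ P)
  have hcount : (n : ℝ) ≤ (twinPrimeCounting (P : ℝ) : ℝ) := by
    have : twinPrimeCounting (P : ℝ) = n := by
      rw [hP, count_twin_eq, Nat.count_nth_succ_of_infinite hinf]
      omega
    rw [this]
  have hb := hcount.trans (hbound (P : ℝ) hPx₁)
  set L : ℝ := Real.log (P : ℝ) with hLdef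
  have hL1 : 1 ≤ L := hlog3.trans (Real.log_le_log (by norm_num) hP3)
  have hL2 : (0:ℝ) < L ^ 2 := by positivity
  have hlogn0 : 0 ≤ Real.log (n : ℝ) := Real.log_nonneg (by exact_mod_cast hn1)
  have hlognL : Real.log (n : ℝ) ≤ L :=
    Real.log_le_log (by positivity) hPn
  have hCe : C * (1 + c * Real.log L / L) ≤ C' := by
    have h1 : c * (Real.log L / L) ≤ (C' - C)/C := hT (P : ℝ) hPT
    have h2 : C * (c * (Real.log L / L)) ≤ C * ((C' - C)/C) :=
      mul_le_mul_of_nonneg_left h1 hC.le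
    have h3 : C * ((C' - C)/C) = C' - C := by field_simp
    have h4 : C * (1 + c * Real.log L / L) = C + C * (c * (Real.log L / L)) := by ring
    linarith
  have key : (n : ℝ) * L ^ 2 ≤ C * twinPrimeConstant * (P : ℝ) * (1 + c * Real.log L / L) := by
    rw [div_mul_eq_mul_div] at hb
    exact (le_div_iff₀ hL2).mp hb
  have hgoal : (n : ℝ) * Real.log (n : ℝ) ^ 2 ≤ (P : ℝ) * (C' * twinPrimeConstant) := by
    have hsq : Real.log (n : ℝ) ^ 2 ≤ L ^ 2 := by nlinarith
    have h1 : (n : ℝ) * Real.log (n : ℝ) ^ 2 ≤ (n : ℝ) * L ^ 2 :=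
      mul_le_mul_of_nonneg_left hsq (by positivity)
    have h2 : C * twinPrimeConstant * (P : ℝ) * (1 + c * Real.log L / L)
        ≤ twinPrimeConstant * (P : ℝ) * C' := by
      have h5 := mul_le_mul_of_nonneg_left hCe
        (by positivity : (0:ℝ) ≤ twinPrimeConstant * (P : ℝ))
      have h6 : twinPrimeConstant * (P : ℝ) * (C * (1 + c * Real.log L / L))
          = C * twinPrimeConstant * (P : ℝ) * (1 + c * Real.log L / L) := by ring
      linarith
    have h7 : twinPrimeConstant * (P : ℝ) * C' = (P : ℝ) * (C' * twinPrimeConstant) := by ring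
    linarith
  show (n : ℝ) / (C' * twinPrimeConstant) * Real.log (n : ℝ) ^ 2 ≤ (P : ℝ)
  rw [div_mul_eq_mul_div, div_le_iff₀ (mul_pos (hC.trans hC') hPi)]
  exact hgoal
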